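/- arXiv:1808.10688 — 5 statements merged into one kernel-verified Lean document; each statement's English description precedes it below -/
import Mathlib

section
/- If P(a₁a₂|x₁x₂) = Q₁(a₁|x₁)·Q₂(a₂|x₂) is a product of two local probability distributions, then the CHSH-variant expression I = P(00|00) − P(01|01) − P(10|10) − P(00|11) satisfies I ≤ 0. -/
/-- On a product of two local distributions, the CHSH-variant
`I = P(00|00) − P(01|01) − P(10|10) − P(00|11)` satisfies `I ≤ 0`. -/
theorem stmt1 (Q₁ Q₂ : Fin 2 → Fin 2 → ℝ)
    (h1pos : ∀ a x, 0 ≤ Q₁ a x) (h2pos : ∀ a x, 0 ≤ Q₂ a x)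
    (h1sum : ∀ x, Q₁ 0 x + Q₁ 1 x = 1) (h2sum : ∀ x, Q₂ 0 x + Q₂ 1 x = 1)
    (P : Fin 2 → Fin 2 → Fin 2 → Fin 2 → ℝ)
    (hP : ∀ a₁ a₂ x₁ x₂, P a₁ a₂ x₁ x₂ = Q₁ a₁ x₁ * Q₂ a₂ x₂) :
    P 0 0 0 0 - P 0 1 0 1 - P 1 0 1 0 - P 0 0 1 1 ≤ 0 := by
  simp only [hP]
  have ha := h1pos 0 0; have hb := h2pos 0 0
  have hc := h1pos 0 1; have he := h2pos 0 1
  have ha1 : Q₁ 0 0 ≤ 1 := by have := h1pos 1 0; have := h1sum 0; linarith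
  have hb1 : Q₂ 0 0 ≤ 1 := by have := h2pos 1 0; have := h2sum 0; linarith
  have hc1 : Q₁ 0 1 ≤ 1 := by have := h1pos 1 1; have := h1sum 1; linarith
  have he1 : Q₂ 0 1 ≤ 1 := by have := h2pos 1 1; have := h2sum 1; linarith
  have e1 : Q₂ 1 1 = 1 - Q₂ 0 1 := by have := h2sum 1; linarith
  have e2 : Q₁ 1 1 = 1 - Q₁ 0 1 := by have := h1sum 1; linarith
  rw [e1, e2]
  have k1 : 0 ≤ Q₁ 0 0 * (1 - Q₂ 0 1) * (1 - Q₂ 0 0) := by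
    apply mul_nonneg (mul_nonneg ha (by linarith)); linarith
  have k2 : 0 ≤ (1 - Q₁ 0 1) * Q₂ 0 0 * (1 - Q₁ 0 0) := by
    apply mul_nonneg (mul_nonneg (by linarith) hb); linarith
  have k3 : 0 ≤ Q₁ 0 1 * Q₂ 0 1 * (1 - Q₁ 0 0 * Q₂ 0 0) := by
    apply mul_nonneg (mul_nonneg hc he); nlinarith
  have k4 : 0 ≤ Q₁ 0 0 * Q₂ 0 0 * (1 - Q₁ 0 1) * (1 - Q₂ 0 1) := by
    apply mul_nonneg (mul_nonneg (mul_nonneg ha hb) (by linarith)); linarith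
  nlinarith [k1, k2, k3, k4]
end

section
/- For a tripartite no-signalling distribution P(a₁a₂a₃|x₁x₂x₃), if P admits a hybrid decomposition as a convex combination of products across the three bipartitions (A₁A₂|A₃), (A₁A₃|A₂), (A₂A₃|A₁) — where in each term the two-party factor may be an arbitrary no-signalling distribution and the single-party factor an arbitrary distribution — then I_sym = I^{12}_{0|0} + I^{13}_{0|0} + I^{23}_{0|0} − P(000|000) ≤ 0, where I^{ij}_{0|0} denotes the lifted CHSH-variant on parties i,j with the third party's input and output fixed to 0. -/
/-- A bipartite no-signalling probability distribution `B a₁ a₂ x₁ x₂`. -/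
def IsNSBipartite (B : Fin 2 → Fin 2 → Fin 2 → Fin 2 → ℝ) : Prop :=
  (∀ a₁ a₂ x₁ x₂, 0 ≤ B a₁ a₂ x₁ x₂) ∧
  (∀ x₁ x₂, ∑ a₁, ∑ a₂, B a₁ a₂ x₁ x₂ = 1) ∧
  (∀ a₁ x₁ x₂ x₂', ∑ a₂, B a₁ a₂ x₁ x₂ = ∑ a₂, B a₁ a₂ x₁ x₂') ∧
  (∀ a₂ x₁ x₁' x₂, ∑ a₁, B a₁ a₂ x₁ x₂ = ∑ a₁, B a₁ a₂ x₁' x₂)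

/-- A single-party probability distribution `S a x`. -/
def IsDist1 (S : Fin 2 → Fin 2 → ℝ) : Prop :=
  (∀ a x, 0 ≤ S a x) ∧ (∀ x, ∑ a, S a x = 1)


lemma cross_nonpos (b c d s t u e : ℝ) (hb : 0 ≤ b) (hc : 0 ≤ c) (hd : 0 ≤ d)
    (he : 0 ≤ e) (hs : 0 ≤ s) (ht : 0 ≤ t) (hu : 0 ≤ u) (hs1 : s ≤ 1)
    (htu : u + t = 1) (hns : b + e = d + c) :
    b * s - b * t - c * s - d * u ≤ 0 := by
  rcases le_total t s with h | h
  · nlinarith [mul_nonneg hd (sub_nonneg.2 hs1), mul_nonneg hc ht,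
      mul_nonneg (sub_nonneg.2 h) he]
  · nlinarith [mul_nonneg hd ht, mul_nonneg hb (sub_nonneg.2 h), mul_nonneg hs hc]

lemma EE_nonpos (B : Fin 2 → Fin 2 → Fin 2 → Fin 2 → ℝ) (S : Fin 2 → Fin 2 → ℝ)
    (hB : IsNSBipartite B) (hS : IsDist1 S) :
    2*(B 0 0 0 0 * S 0 0) - 2*(B 0 1 0 1 * S 0 0) - 2*(B 1 0 1 0 * S 0 0)
      - B 0 0 1 1 * S 0 0 - 2*(B 0 0 0 0 * S 1 1) - B 0 0 1 0 * S 0 1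
      - B 0 0 0 1 * S 0 1 ≤ 0 := by
  obtain ⟨hBnn, -, hNS1, hNS2⟩ := hB
  obtain ⟨hSnn, hSsum⟩ := hS
  have h1 : B 0 0 0 0 + B 1 0 0 0 = B 0 0 1 0 + B 1 0 1 0 := by
    have := hNS2 0 0 1 0
    simpa [Fin.sum_univ_two] using this
  have h2 : B 0 0 0 0 + B 0 1 0 0 = B 0 0 0 1 + B 0 1 0 1 := by
    have := hNS1 0 0 0 1
    simpa [Fin.sum_univ_two] using this
  have h3 : S 0 0 + S 1 0 = 1 := by simpa [Fin.sum_univ_two] using hSsum 0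
  have h4 : S 0 1 + S 1 1 = 1 := by simpa [Fin.sum_univ_two] using hSsum 1
  have hs1 : S 0 0 ≤ 1 := by linarith [hSnn 1 0]
  have crossA := cross_nonpos (B 0 0 0 0) (B 1 0 1 0) (B 0 0 1 0) (S 0 0) (S 1 1)
    (S 0 1) (B 1 0 0 0) (hBnn _ _ _ _) (hBnn _ _ _ _) (hBnn _ _ _ _) (hBnn _ _ _ _)
    (hSnn _ _) (hSnn _ _) (hSnn _ _) hs1 h4 h1
  have crossB := cross_nonpos (B 0 0 0 0) (B 0 1 0 1) (B 0 0 0 1) (S 0 0) (S 1 1)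
    (S 0 1) (B 0 1 0 0) (hBnn _ _ _ _) (hBnn _ _ _ _) (hBnn _ _ _ _) (hBnn _ _ _ _)
    (hSnn _ _) (hSnn _ _) (hSnn _ _) hs1 h4 h2
  nlinarith [crossA, crossB, mul_nonneg (hBnn 0 1 0 1) (hSnn 0 0),
    mul_nonneg (hBnn 1 0 1 0) (hSnn 0 0), mul_nonneg (hBnn 0 0 1 1) (hSnn 0 0)]

lemma group_nonpos {N : ℕ} (q : Fin N → ℝ) (hq : ∀ l, 0 ≤ q l)
    (B : Fin N → Fin 2 → Fin 2 → Fin 2 → Fin 2 → ℝ) (S : Fin N → Fin 2 → Fin 2 → ℝ)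
    (hB : ∀ l, IsNSBipartite (B l)) (hS : ∀ l, IsDist1 (S l)) :
    ∑ l, q l * (2*(B l 0 0 0 0 * S l 0 0) - 2*(B l 0 1 0 1 * S l 0 0)
      - 2*(B l 1 0 1 0 * S l 0 0) - B l 0 0 1 1 * S l 0 0
      - 2*(B l 0 0 0 0 * S l 1 1) - B l 0 0 1 0 * S l 0 1
      - B l 0 0 0 1 * S l 0 1) ≤ 0 := by
  apply Finset.sum_nonpos
  intro l _
  exact mul_nonpos_of_nonneg_of_nonpos (hq l) (EE_nonpos (B l) (S l) (hB l) (hS l))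

lemma group_expand {N : ℕ} (q : Fin N → ℝ)
    (B : Fin N → Fin 2 → Fin 2 → Fin 2 → Fin 2 → ℝ) (S : Fin N → Fin 2 → Fin 2 → ℝ) :
    ∑ l, q l * (2*(B l 0 0 0 0 * S l 0 0) - 2*(B l 0 1 0 1 * S l 0 0)
      - 2*(B l 1 0 1 0 * S l 0 0) - B l 0 0 1 1 * S l 0 0
      - 2*(B l 0 0 0 0 * S l 1 1) - B l 0 0 1 0 * S l 0 1
      - B l 0 0 0 1 * S l 0 1)
    = 2*(∑ l, q l * B l 0 0 0 0 * S l 0 0) - 2*(∑ l, q l * B l 0 1 0 1 * S l 0 0)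
      - 2*(∑ l, q l * B l 1 0 1 0 * S l 0 0) - (∑ l, q l * B l 0 0 1 1 * S l 0 0)
      - 2*(∑ l, q l * B l 0 0 0 0 * S l 1 1) - (∑ l, q l * B l 0 0 1 0 * S l 0 1)
      - (∑ l, q l * B l 0 0 0 1 * S l 0 1) := by
  simp only [Finset.mul_sum, ← Finset.sum_sub_distrib]
  exact Finset.sum_congr rfl fun l _ => by ring

/-- if a tripartite no-signalling distribution `P` admits a hybrid
(biseparable) decomposition as a convex combination of products across the three
bipartitions `(A₁A₂|A₃)`, `(A₁A₃|A₂)`, `(A₂A₃|A₁)`, with no-signalling two-party factors,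
then `I_sym = I^{12}_{0|0} + I^{13}_{0|0} + I^{23}_{0|0} − P(000|000) ≤ 0`. -/
theorem stmt3 (P : Fin 2 → Fin 2 → Fin 2 → Fin 2 → Fin 2 → Fin 2 → ℝ)
    (N₁ N₂ N₃ : ℕ)
    (q₁ : Fin N₁ → ℝ) (q₂ : Fin N₂ → ℝ) (q₃ : Fin N₃ → ℝ)
    (hq₁ : ∀ l, 0 ≤ q₁ l) (hq₂ : ∀ l, 0 ≤ q₂ l) (hq₃ : ∀ l, 0 ≤ q₃ l)
    (hqsum : ∑ l, q₁ l + (∑ l, q₂ l) + (∑ l, q₃ l) = 1)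
    (B₁₂ : Fin N₁ → Fin 2 → Fin 2 → Fin 2 → Fin 2 → ℝ) (S₃ : Fin N₁ → Fin 2 → Fin 2 → ℝ)
    (B₁₃ : Fin N₂ → Fin 2 → Fin 2 → Fin 2 → Fin 2 → ℝ) (S₂ : Fin N₂ → Fin 2 → Fin 2 → ℝ)
    (B₂₃ : Fin N₃ → Fin 2 → Fin 2 → Fin 2 → Fin 2 → ℝ) (S₁ : Fin N₃ → Fin 2 → Fin 2 → ℝ)
    (hB₁₂ : ∀ l, IsNSBipartite (B₁₂ l)) (hS₃ : ∀ l, IsDist1 (S₃ l))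
    (hB₁₃ : ∀ l, IsNSBipartite (B₁₃ l)) (hS₂ : ∀ l, IsDist1 (S₂ l))
    (hB₂₃ : ∀ l, IsNSBipartite (B₂₃ l)) (hS₁ : ∀ l, IsDist1 (S₁ l))
    (hP : ∀ a₁ a₂ a₃ x₁ x₂ x₃, P a₁ a₂ a₃ x₁ x₂ x₃ =
      (∑ l, q₁ l * B₁₂ l a₁ a₂ x₁ x₂ * S₃ l a₃ x₃) +
      (∑ l, q₂ l * B₁₃ l a₁ a₃ x₁ x₃ * S₂ l a₂ x₂) +
      (∑ l, q₃ l * B₂₃ l a₂ a₃ x₂ x₃ * S₁ l a₁ x₁)) :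
    -- I^{12}_{0|0}
    (P 0 0 0 0 0 0 - P 0 1 0 0 1 0 - P 1 0 0 1 0 0 - P 0 0 0 1 1 0) +
    -- I^{13}_{0|0}
    (P 0 0 0 0 0 0 - P 0 0 1 0 0 1 - P 1 0 0 1 0 0 - P 0 0 0 1 0 1) +
    -- I^{23}_{0|0}
    (P 0 0 0 0 0 0 - P 0 0 1 0 0 1 - P 0 1 0 0 1 0 - P 0 0 0 0 1 1) -
    P 0 0 0 0 0 0 ≤ 0 := by
  have hA := group_nonpos q₁ hq₁ B₁₂ S₃ hB₁₂ hS₃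
  have hB := group_nonpos q₂ hq₂ B₁₃ S₂ hB₁₃ hS₂
  have hC := group_nonpos q₃ hq₃ B₂₃ S₁ hB₂₃ hS₁
  rw [group_expand] at hA hB hC
  simp only [hP]
  linarith [hA, hB, hC]
end

section
/- Let n ≥ 3 and let P be the n-partite no-signalling box defined by P(a⃗|x⃗) = 1/2^{n−1} if ⊕ᵢaᵢ = ⊕_{i<j} xᵢxⱼ and 0 otherwise, with all aᵢ,xᵢ ∈ {0,1}. Then the symmetric Bell expression I_sym = ∑_{i<j} I^{ij}_{0⃗|0⃗} − C(n−1,2)·P(0⃗|0⃗) evaluates to (n−1)/2^{n−1} > 0 on P. -/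
open Finset

noncomputable section

/-- The all-zero outcome/input string. -/
def zvec (n : ℕ) : Fin n → Fin 2 := fun _ => 0

/-- The string which is zero except at positions `i` (value `u`) and `j` (value `v`). -/
def upd2 (n : ℕ) (i j : Fin n) (u v : Fin 2) : Fin n → Fin 2 :=
  Function.update (Function.update (zvec n) i u) j v

/-- The lifted CHSH-variant `I^{ij}_{0⃗|0⃗}` on parties `i, j`, all other parties having
input and outcome fixed to `0`. -/
def liftedCHSH (n : ℕ) (P : (Fin n → Fin 2) → (Fin n → Fin 2) → ℝ) (i j : Fin n) : ℝ :=
  P (upd2 n i j 0 0) (upd2 n i j 0 0) - P (upd2 n i j 1 0) (upd2 n i j 1 0)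
    - P (upd2 n i j 0 1) (upd2 n i j 0 1) - P (upd2 n i j 0 0) (upd2 n i j 1 1)

/-- The symmetric Bell expression `I_sym = ∑_{i<j} I^{ij}_{0⃗|0⃗} − C(n−1,2)·P(0⃗|0⃗)`. -/
def Isym (n : ℕ) (P : (Fin n → Fin 2) → (Fin n → Fin 2) → ℝ) : ℝ :=
  (∑ i, ∑ j ∈ univ.filter (fun j => i < j), liftedCHSH n P i j)
    - ((n - 1).choose 2 : ℝ) * P (zvec n) (zvec n)

/-- The `n`-partite no-signalling box `P(a⃗|x⃗) = 1/2^{n−1}` if `⊕ᵢaᵢ = ⊕_{i<j} xᵢxⱼ`,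
and `0` otherwise. -/
def NSbox (n : ℕ) : (Fin n → Fin 2) → (Fin n → Fin 2) → ℝ := fun a x =>
  if (∑ i, (a i).val) % 2
      = (∑ i, ∑ j ∈ univ.filter (fun j => i < j), (x i).val * (x j).val) % 2
  then 1 / 2 ^ (n - 1) else 0

lemma upd2_self (n : ℕ) (i j : Fin n) : upd2 n i j 0 0 = zvec n := by
  funext k
  simp [upd2, zvec, Function.update_apply]

lemma upd2_i {n : ℕ} {i j : Fin n} (hij : i ≠ j) (u v : Fin 2) : upd2 n i j u v i = u := by
  simp [upd2, Function.update_apply, hij]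

lemma upd2_j {n : ℕ} (i j : Fin n) (u v : Fin 2) : upd2 n i j u v j = v := by
  simp [upd2]

lemma upd2_other {n : ℕ} {i j k : Fin n} (hki : k ≠ i) (hkj : k ≠ j) (u v : Fin 2) :
    upd2 n i j u v k = 0 := by
  simp [upd2, Function.update_apply, hki, hkj, zvec]

lemma sum_upd2 {n : ℕ} {i j : Fin n} (hij : i ≠ j) (u v : Fin 2) :
    ∑ k, ((upd2 n i j u v) k).val = u.val + v.val := by
  rw [Finset.sum_eq_add_of_mem i j (mem_univ _) (mem_univ _) hij
    (fun c _ hc => by simp [upd2_other hc.1 hc.2])]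
  rw [upd2_i hij, upd2_j]

lemma prodsum_upd2 {n : ℕ} {i j : Fin n} (hij : i < j) (u v : Fin 2) :
    ∑ p, ∑ q ∈ univ.filter (fun q => p < q),
      ((upd2 n i j u v) p).val * ((upd2 n i j u v) q).val = u.val * v.val := by
  rw [Finset.sum_eq_single_of_mem i (mem_univ _)]
  · rw [Finset.sum_eq_single_of_mem j (by simp [hij])]
    · rw [upd2_i hij.ne, upd2_j]
    · intro q hq hqj
      simp [upd2_other (mem_filter.mp hq).2.ne' hqj]
  · intro p _ hpi
    by_cases hpj : p = j
    · subst hpj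
      refine Finset.sum_eq_zero fun q hq => ?_
      rcases mem_filter.mp hq with ⟨_, h⟩
      simp [upd2_other (hij.trans h).ne' h.ne']
    · refine Finset.sum_eq_zero fun q hq => ?_
      simp [upd2_other hpi hpj]

lemma NSbox_zz (n : ℕ) : NSbox n (zvec n) (zvec n) = 1 / 2 ^ (n - 1) := by
  simp [NSbox, zvec]

lemma lifted_eval {n : ℕ} {i j : Fin n} (hij : i < j) :
    liftedCHSH n (NSbox n) i j = 1 / 2 ^ (n - 1) := by
  have hne := hij.ne
  have h1 : NSbox n (upd2 n i j 1 0) (upd2 n i j 1 0) = 0 := by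
    simp [NSbox, sum_upd2 hne, prodsum_upd2 hij]
  have h2 : NSbox n (upd2 n i j 0 1) (upd2 n i j 0 1) = 0 := by
    simp [NSbox, sum_upd2 hne, prodsum_upd2 hij]
  have h3 : NSbox n (zvec n) (upd2 n i j 1 1) = 0 := by
    simp [NSbox, zvec, prodsum_upd2 hij]
  rw [liftedCHSH, upd2_self, h1, h2, h3, NSbox_zz]; ring

lemma pair_count (n : ℕ) :
    ∑ i : Fin n, (univ.filter (fun j => i < j)).card = n.choose 2 := by
  have h : ∀ i : Fin n, (univ.filter (fun j => i < j)).card = n - 1 - i.val := by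
    intro i; rw [Finset.filter_lt_eq_Ioi, Fin.card_Ioi]
  simp_rw [h]
  rw [Fin.sum_univ_eq_sum_range (fun i => n - 1 - i) n,
    Finset.sum_range_reflect (fun j => j) n, Finset.sum_range_id, Nat.choose_two_right]

/-- on the generalized PR box, `I_sym` evaluates to `(n−1)/2^{n−1} > 0`. -/
theorem stmt7 (n : ℕ) (hn : 3 ≤ n) :
    Isym n (NSbox n) = ((n : ℝ) - 1) / 2 ^ (n - 1) ∧ 0 < Isym n (NSbox n) := by
  have hc : Isym n (NSbox n) = ((n : ℝ) - 1) / 2 ^ (n - 1) := by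
    rw [Isym, NSbox_zz]
    have hrow : ∀ i : Fin n, ∑ j ∈ univ.filter (fun j => i < j), liftedCHSH n (NSbox n) i j
        = ((univ.filter (fun j => i < j)).card : ℝ) * (1 / 2 ^ (n - 1)) := by
      intro i
      rw [Finset.sum_congr rfl (fun j hj => lifted_eval (mem_filter.mp hj).2),
        Finset.sum_const, nsmul_eq_mul]
    simp_rw [hrow]
    rw [← Finset.sum_mul, ← Nat.cast_sum, pair_count]
    obtain ⟨m, rfl⟩ : ∃ m, n = m + 1 := ⟨n - 1, by omega⟩
    have hch : (m + 1).choose 2 = m + m.choose 2 := by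
      rw [Nat.choose_succ_succ, Nat.choose_one_right]
    rw [hch]
    push_cast
    ring
  refine ⟨hc, ?_⟩
  rw [hc]
  have h3 : (3 : ℝ) ≤ n := by exact_mod_cast hn
  apply div_pos (by linarith) (by positivity)

end
end

section
/- Fix n ≥ 3 and θ ∈ (0, π/4). Set α₀ = arctan(tan(θ)^{−3/(3n−4)}) and α₁ = −arctan(tan(θ)^{−1/(3n−4)}). Then cos^{n−1}(α₀) sin(α₁) cos(θ) + sin^{n−1}(α₀) cos(α₁) sin(θ) = 0 and cos^{n−2}(α₀) cos²(α₁) cos(θ) − sin^{n−2}(α₀) sin²(α₁) sin(θ) = 0, while cos^n(α₀) cos(θ) − sin^n(α₀) sin(θ) ≠ 0. -/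
open Real

/-- For `n ≥ 3`, `θ ∈ (0,π/4)`, with
`α₀ = arctan(tan θ ^ (−3/(3n−4)))` and `α₁ = −arctan(tan θ ^ (−1/(3n−4)))`, the Hardy-type
conditions hold: the `P(10 0⃗|10 0⃗)` and `P(00 0⃗|11 0⃗)` amplitudes vanish while the
`P(0⃗|0⃗)` amplitude does not. -/
theorem stmt11 (n : ℕ) (hn : 3 ≤ n) (θ : ℝ) (hθ : θ ∈ Set.Ioo 0 (π / 4))
    (α₀ α₁ : ℝ)
    (hα₀ : α₀ = arctan (tan θ ^ (-(3 : ℝ) / (3 * (n : ℝ) - 4))))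
    (hα₁ : α₁ = -arctan (tan θ ^ (-(1 : ℝ) / (3 * (n : ℝ) - 4)))) :
    cos α₀ ^ (n - 1) * sin α₁ * cos θ + sin α₀ ^ (n - 1) * cos α₁ * sin θ = 0 ∧
    cos α₀ ^ (n - 2) * cos α₁ ^ 2 * cos θ - sin α₀ ^ (n - 2) * sin α₁ ^ 2 * sin θ = 0 ∧
    cos α₀ ^ n * cos θ - sin α₀ ^ n * sin θ ≠ 0 := by
  obtain ⟨hθ0, hθ4⟩ := hθ
  have hπ := pi_pos
  have hθ2 : θ < π / 2 := by linarith
  have hc : 0 < cos θ := cos_pos_of_mem_Ioo ⟨by linarith, hθ2⟩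
  set t := tan θ with hT
  have ht0 : 0 < t := tan_pos_of_pos_of_lt_pi_div_two hθ0 hθ2
  have ht1 : t < 1 := by
    have h := tan_lt_tan_of_lt_of_lt_pi_div_two (by linarith : -(π/2) < θ)
      (by linarith : π/4 < π/2) hθ4
    rwa [tan_pi_div_four] at h
  have hsin : sin θ = t * cos θ := by
    rw [hT, tan_eq_sin_div_cos]; field_simp
  set e : ℝ := 3 * (n : ℝ) - 4 with hE
  have hn3 : (3 : ℝ) ≤ (n : ℝ) := by exact_mod_cast hn
  have he : 0 < e := by rw [hE]; linarith
  set a : ℝ := t ^ (-(3 : ℝ) / e) with hA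
  set b : ℝ := t ^ (-(1 : ℝ) / e) with hB
  have ha0 : 0 < a := rpow_pos_of_pos ht0 _
  have hb0 : 0 < b := rpow_pos_of_pos ht0 _
  have hpa : ∀ m : ℕ, a ^ m = t ^ (-(3 : ℝ) / e * m) := fun m => by
    rw [hA, ← rpow_natCast (t ^ (-(3:ℝ)/e)) m, ← rpow_mul ht0.le]
  have hpb : ∀ m : ℕ, b ^ m = t ^ (-(1 : ℝ) / e * m) := fun m => by
    rw [hB, ← rpow_natCast (t ^ (-(1:ℝ)/e)) m, ← rpow_mul ht0.le]
  have hc1 : ((n - 1 : ℕ) : ℝ) = (n : ℝ) - 1 := by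
    have h1 : 1 ≤ n := by omega
    push_cast [h1]; ring
  have hc2 : ((n - 2 : ℕ) : ℝ) = (n : ℝ) - 2 := by
    have h2 : 2 ≤ n := by omega
    push_cast [h2]; ring
  have key1 : a ^ (n - 1) * t = b := by
    rw [hpa, hc1, hB]
    have h : t ^ (-(3:ℝ)/e * ((n:ℝ)-1)) * t = t ^ (-(3:ℝ)/e * ((n:ℝ)-1) + 1) := by
      rw [rpow_add ht0, rpow_one]
    rw [h]
    congr 1
    field_simp
    ring
  have key2 : a ^ (n - 2) * b ^ 2 * t = 1 := by
    rw [hpa, hpb, hc2]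
    have h : t ^ (-(3:ℝ)/e * ((n:ℝ)-2)) * t ^ (-(1:ℝ)/e * (2:ℕ)) * t
        = t ^ (-(3:ℝ)/e * ((n:ℝ)-2) + -(1:ℝ)/e * (2:ℕ) + 1) := by
      rw [rpow_add ht0, rpow_add ht0, rpow_one]
    rw [h]
    have h0 : -(3:ℝ)/e * ((n:ℝ)-2) + -(1:ℝ)/e * (2:ℕ) + 1 = 0 := by
      push_cast; field_simp; ring
    rw [h0, rpow_zero]
  have key3 : 1 < a ^ n * t := by
    rw [hpa]
    have h : t ^ (-(3:ℝ)/e * (n:ℝ)) * t = t ^ (-(3:ℝ)/e * (n:ℝ) + 1) := by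
      rw [rpow_add ht0, rpow_one]
    rw [h]
    rw [one_lt_rpow_iff_of_pos ht0]
    right
    constructor
    · exact ht1
    · have heq : -(3:ℝ)/e * (n:ℝ) + 1 = (-3 * (n:ℝ) + e) / e := by
        field_simp
      rw [heq]
      exact div_neg_of_neg_of_pos (by rw [hE]; linarith) he
  -- now the three goals
  have hsa : (0:ℝ) < Real.sqrt (1 + a ^ 2) := Real.sqrt_pos.2 (by nlinarith)
  have hsb : (0:ℝ) < Real.sqrt (1 + b ^ 2) := Real.sqrt_pos.2 (by nlinarith)
  rw [hα₀, hα₁, sin_neg, cos_neg, cos_arctan, sin_arctan, cos_arctan, sin_arctan]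
  refine ⟨?_, ?_, ?_⟩
  · rw [div_pow, div_pow, one_pow, hsin]
    field_simp
    linear_combination (cos θ) * key1
  · rw [neg_sq, div_pow, div_pow, div_pow, one_pow, one_pow, hsin]
    field_simp
    linear_combination (-cos θ) * key2
  · rw [div_pow, div_pow, one_pow, hsin]
    intro hzero
    have hne : Real.sqrt (1 + a ^ 2) ^ n ≠ 0 := by positivity
    have : 1 * cos θ - a ^ n * (t * cos θ) = 0 := by
      field_simp at hzero
      linarith [hzero]
    nlinarith [key3, hc]
end

section
/- Fix n ≥ 3 and θ ∈ (0, π/4), and let P be the distribution obtained by all n parties measuring the state |GHZⁿ_θ⟩ = cos θ|0⟩^⊗n − sin θ|1⟩^⊗n with the identical projective measurements m_{0|x} = cos α_x⟨0| + sin α_x⟨1|, m_{1|x} = sin α_x⟨0| − cos α_x⟨1|, where α₀ = arctan(tan(θ)^{−3/(3n−4)}) and α₁ = −arctan(tan(θ)^{−1/(3n−4)}). Then the symmetric Bell expression I_sym = ∑_{i<j} I^{ij}_{0⃗|0⃗} − C(n−1,2)·P(0⃗|0⃗) evaluates to (n−1)·(cos^n(α₀)cos θ − sin^n(α₀)sin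 θ)² > 0. -/
open Finset Real

noncomputable section

/-- The measurement covector coefficients: `m_{0|x} = cos α_x⟨0| + sin α_x⟨1|`,
`m_{1|x} = sin α_x⟨0| − cos α_x⟨1|`, where `α_x = α₀` for input `x = 0` and `α₁` for
input `x = 1`; `meas α₀ α₁ a x b` is the coefficient of `⟨b|` in `m_{a|x}`. -/
def meas (α₀ α₁ : ℝ) (a x b : Fin 2) : ℝ :=
  let α := if x = 0 then α₀ else α₁
  if a = 0 then (if b = 0 then Real.cos α else Real.sin α)
  else (if b = 0 then Real.sin α else -Real.cos α)

/-- The outcome distribution obtained when all `n` parties measure the state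
`|GHZⁿ_θ⟩ = cos θ|0⟩^⊗n − sin θ|1⟩^⊗n` with the measurements `meas α₀ α₁`:
`P(a⃗|x⃗) = |(⊗ᵢ m_{aᵢ|xᵢ})|GHZⁿ_θ⟩|²`. -/
def ghzProb (n : ℕ) (θ α₀ α₁ : ℝ) : (Fin n → Fin 2) → (Fin n → Fin 2) → ℝ := fun a x =>
  (Real.cos θ * ∏ i, meas α₀ α₁ (a i) (x i) 0
    - Real.sin θ * ∏ i, meas α₀ α₁ (a i) (x i) 1) ^ 2

/-- Product of a two-point modification. -/
lemma prod_upd2_meas {n : ℕ} (α₀ α₁ : ℝ) (i j : Fin n) (hij : i ≠ j) (u v p q b : Fin 2) :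
    ∏ k, meas α₀ α₁ (upd2 n i j u v k) (upd2 n i j p q k) b
      = meas α₀ α₁ u p b * meas α₀ α₁ v q b * meas α₀ α₁ 0 0 b ^ (n - 2) := by
  have hmemj : j ∈ (univ : Finset (Fin n)) := mem_univ j
  rw [← Finset.mul_prod_erase univ _ hmemj]
  have hmemi : i ∈ (univ : Finset (Fin n)).erase j := Finset.mem_erase.2 ⟨hij, mem_univ i⟩
  rw [← Finset.mul_prod_erase _ _ hmemi]
  have hj : ∀ w z : Fin 2, upd2 n i j w z j = z := by
    intro w z; simp [upd2]
  have hi : ∀ w z : Fin 2, upd2 n i j w z i = w := by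
    intro w z; simp [upd2, Function.update_of_ne hij]
  have hk : ∀ (w z : Fin 2) (k : Fin n), k ≠ i → k ≠ j → upd2 n i j w z k = 0 := by
    intro w z k hki hkj
    simp [upd2, Function.update_of_ne hkj, Function.update_of_ne hki, zvec]
  rw [hj, hj, hi, hi]
  have hrest : ∏ k ∈ ((univ : Finset (Fin n)).erase j).erase i,
      meas α₀ α₁ (upd2 n i j u v k) (upd2 n i j p q k) b
      = meas α₀ α₁ 0 0 b ^ (n - 2) := by
    rw [Finset.prod_congr rfl (fun k hk' => by
      have hki : k ≠ i := (Finset.mem_erase.1 hk').1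
      have hkj : k ≠ j := (Finset.mem_erase.1 (Finset.mem_erase.1 hk').2).1
      rw [hk u v k hki hkj, hk p q k hki hkj]), Finset.prod_const]
    congr 1
    rw [Finset.card_erase_of_mem hmemi, Finset.card_erase_of_mem hmemj, Finset.card_univ,
      Fintype.card_fin]
    omega
  rw [hrest]; ring

/-- for `n ≥ 3`, `θ ∈ (0,π/4)` and the angles
`α₀ = arctan(tan θ ^ (−3/(3n−4)))`, `α₁ = −arctan(tan θ ^ (−1/(3n−4)))`, the symmetric
Bell expression on the GHZ distribution evaluates to
`(n−1)(cosⁿα₀ cos θ − sinⁿα₀ sin θ)² > 0`. -/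
theorem stmt12 (n : ℕ) (hn : 3 ≤ n) (θ : ℝ) (hθ : θ ∈ Set.Ioo 0 (π / 4))
    (α₀ α₁ : ℝ)
    (hα₀ : α₀ = arctan (tan θ ^ (-(3 : ℝ) / (3 * (n : ℝ) - 4))))
    (hα₁ : α₁ = -arctan (tan θ ^ (-(1 : ℝ) / (3 * (n : ℝ) - 4)))) :
    Isym n (ghzProb n θ α₀ α₁)
      = ((n : ℝ) - 1) * (Real.cos α₀ ^ n * Real.cos θ - Real.sin α₀ ^ n * Real.sin θ) ^ 2 ∧
    0 < Isym n (ghzProb n θ α₀ α₁) := by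
  obtain ⟨m, hm1, rfl⟩ : ∃ m, 1 ≤ m ∧ n = m + 2 := ⟨n - 2, by omega, by omega⟩
  obtain ⟨hθ0, hθ4⟩ := hθ
  have hπ := pi_pos
  have hcθ : 0 < Real.cos θ := Real.cos_pos_of_mem_Ioo ⟨by linarith, by linarith⟩
  have hsθ : 0 < Real.sin θ := Real.sin_pos_of_pos_of_lt_pi hθ0 (by linarith)
  set t := Real.tan θ with htdef
  have ht : 0 < t := by rw [htdef, Real.tan_eq_sin_div_cos]; positivity
  have ht1 : t < 1 := by
    have h := Real.tan_lt_tan_of_nonneg_of_lt_pi_div_two hθ0.le (by linarith) hθ4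
    rwa [Real.tan_pi_div_four] at h
  have hst : Real.sin θ = t * Real.cos θ := by
    rw [htdef, Real.tan_eq_sin_div_cos, div_mul_cancel₀ _ hcθ.ne']
  set D : ℝ := 3 * ((m + 2 : ℕ) : ℝ) - 4 with hDdef
  have hmcast : ((m + 2 : ℕ) : ℝ) = (m : ℝ) + 2 := by push_cast; ring
  have hm1' : (1 : ℝ) ≤ (m : ℝ) := by exact_mod_cast hm1
  have hD : 0 < D := by rw [hDdef, hmcast]; linarith
  set s₀ := t ^ (-(3 : ℝ) / D) with hs₀def
  set s₁ := t ^ (-(1 : ℝ) / D) with hs₁def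
  have hs₀pos : 0 < s₀ := Real.rpow_pos_of_pos ht _
  have hs₁pos : 0 < s₁ := Real.rpow_pos_of_pos ht _
  have hc0 : 0 < Real.cos α₀ := by rw [hα₀]; exact Real.cos_arctan_pos _
  have hc1 : 0 < Real.cos α₁ := by
    rw [hα₁, Real.cos_neg]; exact Real.cos_arctan_pos _
  have hsin0 : Real.sin α₀ = s₀ * Real.cos α₀ := by
    have htan : Real.tan α₀ = s₀ := by rw [hα₀, Real.tan_arctan]
    rw [Real.tan_eq_sin_div_cos, div_eq_iff hc0.ne'] at htan
    exact htan
  have hsin1 : Real.sin α₁ = -s₁ * Real.cos α₁ := by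
    have htan : Real.tan α₁ = -s₁ := by rw [hα₁, Real.tan_neg, Real.tan_arctan]
    rw [Real.tan_eq_sin_div_cos, div_eq_iff hc1.ne'] at htan
    rw [htan]
  -- rpow arithmetic
  have pow_nat : ∀ (M : ℕ) (e : ℝ), (t ^ e) ^ M = t ^ (e * M) := fun M e => by
    rw [← Real.rpow_natCast (t ^ e) M, ← Real.rpow_mul ht.le]
  have hDval : D = 3 * (m : ℝ) + 2 := by rw [hDdef, hmcast]; ring
  have h0pos : (0 : ℝ) < 3 * (m : ℝ) + 2 := by positivity
  have h0 : (3 : ℝ) * (m : ℝ) + 2 ≠ 0 := ne_of_gt h0pos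
  have hK1 : s₁ = t * s₀ ^ (m + 1) := by
    rw [hs₀def, pow_nat]
    nth_rewrite 1 [show t = t ^ (1 : ℝ) from (Real.rpow_one t).symm]
    rw [← Real.rpow_add ht]
    rw [show (1 : ℝ) + -(3 : ℝ) / D * ((m + 1 : ℕ) : ℝ) = -(1 : ℝ) / D by
      rw [hDval]; push_cast; field_simp [h0]; ring]
  have hK2aux : s₁ ^ 2 * s₀ ^ m = t ^ (-1 : ℝ) := by
    rw [hs₁def, hs₀def, pow_nat, pow_nat, ← Real.rpow_add ht]
    congr 1
    rw [hDval]; push_cast; field_simp [h0]; ring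
  have hK2 : t * (s₁ ^ 2 * s₀ ^ m) = 1 := by
    rw [hK2aux, Real.rpow_neg_one, mul_inv_cancel₀ ht.ne']
  have hK3 : 1 < t * s₀ ^ (m + 2) := by
    rw [hs₀def, pow_nat]
    nth_rewrite 1 [show t = t ^ (1 : ℝ) from (Real.rpow_one t).symm]
    rw [← Real.rpow_add ht]
    refine Real.one_lt_rpow_of_pos_of_lt_one_of_neg ht ht1 ?_
    rw [hDval]
    rw [show (1 : ℝ) + -(3 : ℝ) / (3 * (m : ℝ) + 2) * ((m + 2 : ℕ) : ℝ)
        = -4 / (3 * (m : ℝ) + 2) by push_cast; field_simp [h0]; ring]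
    exact div_neg_of_neg_of_pos (by norm_num) h0pos
  -- the two vanishing amplitudes
  have hz1 : Real.cos θ * (Real.sin α₁ * Real.cos α₀ * Real.cos α₀ ^ m)
      - Real.sin θ * (-Real.cos α₁ * Real.sin α₀ * Real.sin α₀ ^ m) = 0 := by
    rw [hsin1, hsin0, hst, hK1]
    ring
  have hz4 : Real.cos θ * (Real.cos α₁ * Real.cos α₁ * Real.cos α₀ ^ m)
      - Real.sin θ * (Real.sin α₁ * Real.sin α₁ * Real.sin α₀ ^ m) = 0 := by
    rw [hsin1, hsin0, hst]
    linear_combination (-(Real.cos θ * Real.cos α₁ ^ 2 * Real.cos α₀ ^ m)) * hK2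
  -- P(0|0)
  have hP0 : ghzProb (m + 2) θ α₀ α₁ (zvec (m + 2)) (zvec (m + 2))
      = (Real.cos θ * Real.cos α₀ ^ (m + 2) - Real.sin θ * Real.sin α₀ ^ (m + 2)) ^ 2 := by
    simp [ghzProb, zvec, meas, Finset.prod_const, Finset.card_univ]
  -- lifted CHSH value
  have hlift : ∀ i j : Fin (m + 2), i ≠ j →
      liftedCHSH (m + 2) (ghzProb (m + 2) θ α₀ α₁) i j
        = ghzProb (m + 2) θ α₀ α₁ (zvec (m + 2)) (zvec (m + 2)) := by
    intro i j hij
    have h00 : upd2 (m + 2) i j 0 0 = zvec (m + 2) := by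
      funext k; simp [upd2, zvec, Function.update_apply]
    have hsub : m + 2 - 2 = m := by omega
    have e2 : ghzProb (m + 2) θ α₀ α₁ (upd2 (m + 2) i j 1 0) (upd2 (m + 2) i j 1 0) = 0 := by
      rw [ghzProb, prod_upd2_meas α₀ α₁ i j hij 1 0 1 0 0,
        prod_upd2_meas α₀ α₁ i j hij 1 0 1 0 1, hsub]
      rw [pow_eq_zero_iff (two_ne_zero)]
      simp only [meas]
      norm_num
      linear_combination hz1
    have e3 : ghzProb (m + 2) θ α₀ α₁ (upd2 (m + 2) i j 0 1) (upd2 (m + 2) i j 0 1) = 0 := by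
      rw [ghzProb, prod_upd2_meas α₀ α₁ i j hij 0 1 0 1 0,
        prod_upd2_meas α₀ α₁ i j hij 0 1 0 1 1, hsub]
      rw [pow_eq_zero_iff (two_ne_zero)]
      simp only [meas]
      norm_num
      linear_combination hz1
    have e4 : ghzProb (m + 2) θ α₀ α₁ (upd2 (m + 2) i j 0 0) (upd2 (m + 2) i j 1 1) = 0 := by
      rw [ghzProb, prod_upd2_meas α₀ α₁ i j hij 0 0 1 1 0,
        prod_upd2_meas α₀ α₁ i j hij 0 0 1 1 1, hsub]
      rw [pow_eq_zero_iff (two_ne_zero)]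
      simp only [meas]
      norm_num
      linear_combination hz4
    rw [liftedCHSH, e2, e3, e4, h00]
    ring
  -- counting
  have hcount : (∑ i : Fin (m + 2), ∑ j ∈ univ.filter (fun j => i < j),
      liftedCHSH (m + 2) (ghzProb (m + 2) θ α₀ α₁) i j)
      = (((m + 2).choose 2 : ℕ) : ℝ)
        * ghzProb (m + 2) θ α₀ α₁ (zvec (m + 2)) (zvec (m + 2)) := by
    have h1 : ∀ i : Fin (m + 2), ∑ j ∈ univ.filter (fun j => i < j),
        liftedCHSH (m + 2) (ghzProb (m + 2) θ α₀ α₁) i j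
        = ((univ.filter (fun j => i < j)).card : ℝ)
          * ghzProb (m + 2) θ α₀ α₁ (zvec (m + 2)) (zvec (m + 2)) := by
      intro i
      rw [Finset.sum_congr rfl
        (fun j hj => hlift i j (ne_of_lt (Finset.mem_filter.1 hj).2)),
        Finset.sum_const, nsmul_eq_mul]
    rw [Finset.sum_congr rfl (fun i _ => h1 i), ← Finset.sum_mul]
    congr 1
    rw [← Nat.cast_sum]
    congr 1
    have hfil : ∀ i : Fin (m + 2), univ.filter (fun j => i < j) = Finset.Ioi i := by
      intro i; ext k; simp
    have hIoi : ∀ i : Fin (m + 2), (Finset.Ioi i).card = m + 1 - (i : ℕ) := by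
      intro i; rw [Fin.card_Ioi]; omega
    calc ∑ i : Fin (m + 2), (univ.filter (fun j => i < j)).card
        = ∑ i : Fin (m + 2), (m + 1 - (i : ℕ)) := by
          exact Finset.sum_congr rfl fun i _ => by rw [hfil, hIoi]
      _ = ∑ i ∈ Finset.range (m + 2), (m + 1 - i) :=
          Fin.sum_univ_eq_sum_range (fun i => m + 1 - i) (m + 2)
      _ = ∑ i ∈ Finset.range (m + 2), i := by
          have := Finset.sum_range_reflect (fun i => i) (m + 2)
          simpa using this
      _ = (m + 2).choose 2 := by rw [Finset.sum_range_id, Nat.choose_two_right]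
  -- choose identity
  have hch : ((m + 2).choose 2 : ℝ) = ((m + 2 - 1).choose 2 : ℝ) + ((m : ℝ) + 1) := by
    have h : (m + 2).choose 2 = (m + 1).choose 2 + (m + 1) := by
      have h' := Nat.choose_succ_succ (m + 1) 1
      rw [Nat.choose_one_right] at h'
      norm_num at h'
      rw [show m + 1 + 1 = m + 2 by omega] at h'
      omega
    have h2 : m + 2 - 1 = m + 1 := by omega
    rw [h2, h]; push_cast; ring
  have heq : Isym (m + 2) (ghzProb (m + 2) θ α₀ α₁)
      = (((m + 2 : ℕ) : ℝ) - 1)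
        * (Real.cos α₀ ^ (m + 2) * Real.cos θ - Real.sin α₀ ^ (m + 2) * Real.sin θ) ^ 2 := by
    rw [Isym, hcount, hP0, hch, hmcast]
    ring
  refine ⟨heq, ?_⟩
  rw [heq]
  have hinner : Real.cos α₀ ^ (m + 2) * Real.cos θ
      - Real.sin α₀ ^ (m + 2) * Real.sin θ < 0 := by
    rw [hsin0, hst, mul_pow]
    have h := mul_pos (mul_pos hcθ (pow_pos hc0 (m + 2))) (sub_pos.2 hK3)
    have heqn : Real.cos α₀ ^ (m + 2) * Real.cos θ
        - s₀ ^ (m + 2) * Real.cos α₀ ^ (m + 2) * (t * Real.cos θ)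
        = -(Real.cos θ * Real.cos α₀ ^ (m + 2) * (t * s₀ ^ (m + 2) - 1)) := by ring
    rw [heqn]
    linarith [h]
  have hsq : 0 < (Real.cos α₀ ^ (m + 2) * Real.cos θ
      - Real.sin α₀ ^ (m + 2) * Real.sin θ) ^ 2 := pow_two_pos_of_ne_zero hinner.ne
  have hcoef : 0 < ((m + 2 : ℕ) : ℝ) - 1 := by rw [hmcast]; linarith
  exact mul_pos hcoef hsq

end
end
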